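/- Expansion inverts contraction in distribution: if u is an infinite i.i.d. sequence of letters drawn from D_q, then for any history h, the word e_q^h(c^h(u)) is again an i.i.d. sequence distributed according to D_q^⊗ℕ. -/

import Mathlib

open scoped Classical

/-- Bounding set reached from the full state space after reading the history `h`. -/
def wordOp {S A : Type} (op : Set S → A → Set S) (h : List A) : Set S :=
  h.foldl op Set.univ

/-- A letter is active after history `h` if it is the delimiter `♯` or changes the
bounding set `S ∘ h`. -/
def IsActive {S A : Type} (op : Set S → A → Set S) (sharp : A) (h : List A) (a : A) :
    Prop :=
  a = sharp ∨ op (wordOp op h) a ≠ wordOp op h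

/-- The `h`-contraction `c^h`: remove passive letters relative to the evolving
bounding set starting from `S ∘ h`. -/
noncomputable def contract {S A : Type} (op : Set S → A → Set S) (sharp : A) :
    List A → List A → List A
  | _, [] => []
  | h, a :: u =>
    if IsActive op sharp h a then a :: contract op sharp (h ++ [a]) u
    else contract op sharp h u
  termination_by h u => u.length

open MeasureTheory

/-- The distribution `D_q` on `A ∪ {♯}`: mass `q` on the delimiter `♯`,
mass `(1-q)·D(a)` on ordinary letters. -/
noncomputable def DqFun {A : Type} (D : A → ENNReal) (sharp : A) (q : ENNReal)
    (a : A) : ENNReal :=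
  if a = sharp then q else (1 - q) * D a

/-- First `j` letters of an infinite word. -/
def seqPrefix {A : Type} (u : ℕ → A) (j : ℕ) : List A :=
  List.ofFn fun k : Fin j => u (k : ℕ)

/-- Position `j` of the infinite word `u` is active (for history `h` followed by
the prefix of `u`). -/
def SeqActiveAt {S A : Type} (op : Set S → A → Set S) (sharp : A) (h : List A)
    (u : ℕ → A) (j : ℕ) : Prop :=
  IsActive op sharp (h ++ seqPrefix u j) (u j)

/-- `h`-contraction of an infinite word: the subsequence of its active letters. -/
noncomputable def contractSeq {S A : Type} (op : Set S → A → Set S) (sharp : A)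
    (h : List A) (u : ℕ → A) (n : ℕ) : A :=
  u (Nat.nth (SeqActiveAt op sharp h u) n)

/-- State (current history, input pointer) of the expansion process, which reads
i.i.d. letters `r` and, at each micro-step, inserts the drawn letter if it is passive
and otherwise emits the next letter of the input `x`. -/
noncomputable def expState {S A : Type} (op : Set S → A → Set S) (sharp : A)
    (h0 : List A) (x r : ℕ → A) : ℕ → List A × ℕ
  | 0 => (h0, 0)
  | n + 1 =>
    let s := expState op sharp h0 x r n
    if IsActive op sharp s.1 (r n) then (s.1 ++ [x s.2], s.2 + 1)
    else (s.1 ++ [r n], s.2)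

/-- The `n`-th letter produced by the `(h,q)`-expansion of `x` driven by the
randomness source `r` (letters i.i.d. `D_q`): an inserted passive letter, or the
next input letter. -/
noncomputable def expandSeq {S A : Type} (op : Set S → A → Set S) (sharp : A)
    (h0 : List A) (x r : ℕ → A) (n : ℕ) : A :=
  let s := expState op sharp h0 x r n
  if IsActive op sharp s.1 (r n) then x s.2 else r n


namespace Stmt8

variable {S A : Type} (op : Set S → A → Set S) (sharp : A)

theorem wordOp_append (h t : List A) :
    wordOp op (h ++ t) = t.foldl op (wordOp op h) := by
  simp [wordOp, List.foldl_append]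

theorem wordOp_concat (h : List A) (a : A) :
    wordOp op (h ++ [a]) = op (wordOp op h) a := by
  simp [wordOp, List.foldl_append]

theorem wordOp_congr_append {h₁ h₂ : List A} (he : wordOp op h₁ = wordOp op h₂)
    (t : List A) : wordOp op (h₁ ++ t) = wordOp op (h₂ ++ t) := by
  rw [wordOp_append, wordOp_append, he]

theorem isActive_congr {h₁ h₂ : List A} (he : wordOp op h₁ = wordOp op h₂) (a : A) :
    IsActive op sharp h₁ a ↔ IsActive op sharp h₂ a := by
  unfold IsActive; rw [he]

theorem wordOp_concat_of_passive {h : List A} {a : A}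
    (hp : ¬ IsActive op sharp h a) : wordOp op (h ++ [a]) = wordOp op h := by
  rw [wordOp_concat]
  unfold IsActive at hp
  push_neg at hp
  exact hp.2

theorem seqPrefix_succ (u : ℕ → A) (n : ℕ) :
    seqPrefix u (n + 1) = seqPrefix u n ++ [u n] := by
  rw [seqPrefix, List.ofFn_succ']
  simp [seqPrefix, List.concat_eq_append]

theorem seqPrefix_add (u : ℕ → A) (s j : ℕ) :
    seqPrefix u (s + j) = seqPrefix u s ++ seqPrefix (fun m => u (s + m)) j := by
  induction j with
  | zero => simp [seqPrefix]
  | succ j ih =>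
      rw [show s + (j+1) = (s+j)+1 by omega, seqPrefix_succ, ih, seqPrefix_succ,
        List.append_assoc]

theorem wordOp_prefix_passive {h : List A} {u : ℕ → A} {n : ℕ}
    (hp : ∀ i < n, ¬ SeqActiveAt op sharp h u i) :
    wordOp op (h ++ seqPrefix u n) = wordOp op h := by
  induction n with
  | zero => simp [seqPrefix]
  | succ n ih =>
      rw [seqPrefix_succ, ← List.append_assoc,
        wordOp_concat_of_passive op sharp (hp n (by omega)),
        ih (fun i hi => hp i (by omega))]

theorem seqActiveAt_iff_of_passive_prefix {h : List A} {u : ℕ → A} {n : ℕ}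
    (hp : ∀ i < n, ¬ SeqActiveAt op sharp h u i) :
    SeqActiveAt op sharp h u n ↔ IsActive op sharp h (u n) :=
  isActive_congr op sharp (wordOp_prefix_passive op sharp hp) (u n)

theorem seqActiveAt_congr {h₁ h₂ : List A} (he : wordOp op h₁ = wordOp op h₂)
    (u : ℕ → A) : SeqActiveAt op sharp h₁ u = SeqActiveAt op sharp h₂ u := by
  funext j
  exact propext (isActive_congr op sharp (wordOp_congr_append op he _) (u j))

theorem contractSeq_congr {h₁ h₂ : List A} (he : wordOp op h₁ = wordOp op h₂)
    (u : ℕ → A) : contractSeq op sharp h₁ u = contractSeq op sharp h₂ u := by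
  unfold contractSeq
  rw [seqActiveAt_congr op sharp he u]

theorem count_eq_zero_of {p : ℕ → Prop} {n : ℕ} (hp : ∀ i < n, ¬ p i) :
    Nat.count p n = 0 := by
  induction n with
  | zero => simp
  | succ n ih =>
      rw [Nat.count_succ, if_neg (hp n (by omega)), ih (fun i hi => hp i (by omega))]

theorem nth_zero_eq {p : ℕ → Prop} {n : ℕ} (hmin : ∀ i < n, ¬ p i) (hn : p n) :
    Nat.nth p 0 = n := by
  rw [Nat.nth_zero]
  refine le_antisymm (Nat.sInf_le hn) (le_of_not_gt fun hlt => ?_)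
  exact hmin _ hlt (Nat.sInf_mem ⟨n, hn⟩)

theorem nth_shift {p : ℕ → Prop} (hinf : (setOf p).Infinite) {n : ℕ}
    (hmin : ∀ i < n, ¬ p i) (hn : p n) (j : ℕ) :
    Nat.nth p (j + 1) = n + 1 + Nat.nth (fun m => p (n + 1 + m)) j := by
  set q : ℕ → Prop := fun m => p (n + 1 + m) with hq
  have hqinf : (setOf q).Infinite := by
    by_contra hfin
    rw [Set.not_infinite] at hfin
    have hsub : setOf p ⊆ Set.Iio (n+1) ∪ ((fun m => n + 1 + m) '' setOf q) := by
      intro i hi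
      rcases lt_or_ge i (n+1) with hlt | hge
      · exact Or.inl hlt
      · refine Or.inr ⟨i - (n+1), ?_, show n + 1 + (i - (n+1)) = i by omega⟩
        show p (n + 1 + (i - (n+1)))
        rwa [show n + 1 + (i - (n+1)) = i by omega]
    exact hinf (((Set.finite_Iio (n+1)).union (hfin.image _)).subset hsub)
  have h1 : p (n + 1 + Nat.nth q j) := Nat.nth_mem_of_infinite hqinf j
  have h2 : Nat.count p (n + 1 + Nat.nth q j) = j + 1 := by
    rw [Nat.count_add]
    have hc1 : Nat.count p (n+1) = 1 := by
      rw [Nat.count_succ, if_pos hn, count_eq_zero_of hmin]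
    rw [hc1, Nat.count_nth_of_infinite hqinf]
    omega
  have h3 := Nat.nth_count h1
  rw [h2] at h3
  exact h3

theorem contractSeq_zero {h : List A} {u : ℕ → A} {n : ℕ}
    (hmin : ∀ i < n, ¬ SeqActiveAt op sharp h u i) (hn : SeqActiveAt op sharp h u n) :
    contractSeq op sharp h u 0 = u n := by
  unfold contractSeq
  rw [nth_zero_eq hmin hn]

theorem wordOp_head_active {h : List A} {u : ℕ → A} {n : ℕ}
    (hmin : ∀ i < n, ¬ SeqActiveAt op sharp h u i) :
    wordOp op (h ++ seqPrefix u (n+1)) = wordOp op (h ++ [u n]) := by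
  rw [seqPrefix_succ, ← List.append_assoc, wordOp_concat, wordOp_concat,
    wordOp_prefix_passive op sharp hmin]

theorem seqActiveAt_shift {h : List A} {u : ℕ → A} {n : ℕ}
    (hmin : ∀ i < n, ¬ SeqActiveAt op sharp h u i) :
    SeqActiveAt op sharp (h ++ [u n]) (fun m => u (n + 1 + m))
      = fun j => SeqActiveAt op sharp h u (n + 1 + j) := by
  funext j
  unfold SeqActiveAt
  have h1 : seqPrefix u (n + 1 + j)
      = seqPrefix u (n+1) ++ seqPrefix (fun m => u (n + 1 + m)) j := seqPrefix_add u (n+1) j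
  have h2 : wordOp op ((h ++ [u n]) ++ seqPrefix (fun m => u (n + 1 + m)) j)
      = wordOp op (h ++ seqPrefix u (n + 1 + j)) := by
    rw [h1, ← List.append_assoc]
    exact wordOp_congr_append op (wordOp_head_active op sharp hmin).symm _
  exact propext (isActive_congr op sharp h2 _)

theorem contractSeq_succ_shift {h : List A} {u : ℕ → A} {n : ℕ}
    (hinf : (setOf (SeqActiveAt op sharp h u)).Infinite)
    (hmin : ∀ i < n, ¬ SeqActiveAt op sharp h u i) (hn : SeqActiveAt op sharp h u n)
    (j : ℕ) :
    contractSeq op sharp h u (j + 1)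
      = contractSeq op sharp (h ++ [u n]) (fun m => u (n + 1 + m)) j := by
  unfold contractSeq
  rw [seqActiveAt_shift op sharp hmin]
  rw [nth_shift hinf hmin hn j]

theorem expState_succ (h0 : List A) (x r : ℕ → A) (n : ℕ) :
    expState op sharp h0 x r (n+1) =
      if IsActive op sharp (expState op sharp h0 x r n).1 (r n)
      then ((expState op sharp h0 x r n).1 ++ [x (expState op sharp h0 x r n).2],
        (expState op sharp h0 x r n).2 + 1)
      else ((expState op sharp h0 x r n).1 ++ [r n], (expState op sharp h0 x r n).2) :=
  rfl

theorem expState_zero (h0 : List A) (x r : ℕ → A) :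
    expState op sharp h0 x r 0 = (h0, 0) := rfl

theorem expState_shift_active (h0 : List A) (x r : ℕ → A)
    (hr : IsActive op sharp h0 (r 0)) :
    ∀ i, expState op sharp h0 x r (i+1) =
      ((expState op sharp (h0 ++ [x 0]) (fun m => x (m+1)) (fun m => r (m+1)) i).1,
       (expState op sharp (h0 ++ [x 0]) (fun m => x (m+1)) (fun m => r (m+1)) i).2 + 1) := by
  intro i
  induction i with
  | zero =>
      rw [expState_succ, expState_zero, expState_zero]
      simp [hr]
  | succ i ih =>
      rw [expState_succ, ih, expState_succ]
      set e := expState op sharp (h0 ++ [x 0]) (fun m => x (m+1)) (fun m => r (m+1)) i with he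
      by_cases hA : IsActive op sharp e.1 (r (i+1))
      · rw [if_pos hA, if_pos hA]
      · rw [if_neg hA, if_neg hA]

theorem expState_shift_passive (h0 : List A) (x r : ℕ → A)
    (hr : ¬ IsActive op sharp h0 (r 0)) :
    ∀ i, expState op sharp h0 x r (i+1) =
      expState op sharp (h0 ++ [r 0]) x (fun m => r (m+1)) i := by
  intro i
  induction i with
  | zero =>
      rw [expState_succ, expState_zero, expState_zero]
      simp [hr]
  | succ i ih =>
      rw [expState_succ, ih, expState_succ]

theorem expandSeq_zero (h0 : List A) (x r : ℕ → A) :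
    expandSeq op sharp h0 x r 0 = if IsActive op sharp h0 (r 0) then x 0 else r 0 :=
  rfl

theorem expandSeq_succ_active (h0 : List A) (x r : ℕ → A)
    (hr : IsActive op sharp h0 (r 0)) (i : ℕ) :
    expandSeq op sharp h0 x r (i+1)
      = expandSeq op sharp (h0 ++ [x 0]) (fun m => x (m+1)) (fun m => r (m+1)) i := by
  unfold expandSeq
  rw [expState_shift_active op sharp h0 x r hr i]

theorem expandSeq_succ_passive (h0 : List A) (x r : ℕ → A)
    (hr : ¬ IsActive op sharp h0 (r 0)) (i : ℕ) :
    expandSeq op sharp h0 x r (i+1)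
      = expandSeq op sharp (h0 ++ [r 0]) x (fun m => r (m+1)) i := by
  unfold expandSeq
  rw [expState_shift_passive op sharp h0 x r hr i]

section Measure

variable {A : Type} [Fintype A]

theorem DqFun_sum (D : A → ENNReal) (sharp : A) (hDsharp : D sharp = 0)
    (hDsum : ∑ a, D a = 1) (q : ENNReal) (hq1 : q ≤ 1) :
    ∑ a, DqFun D sharp q a = 1 := by
  classical
  have h1 : ∑ a ∈ Finset.univ.erase sharp, D a = 1 := by
    have h := Finset.add_sum_erase Finset.univ D (Finset.mem_univ sharp)
    rw [hDsharp, zero_add] at h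
    rw [h, hDsum]
  rw [← Finset.add_sum_erase Finset.univ _ (Finset.mem_univ sharp)]
  have h2 : ∑ a ∈ Finset.univ.erase sharp, DqFun D sharp q a = 1 - q := by
    rw [Finset.sum_congr rfl
      (fun a ha => show DqFun D sharp q a = (1 - q) * D a from
        if_neg (Finset.ne_of_mem_erase ha)),
      ← Finset.mul_sum, h1, mul_one]
  rw [h2, DqFun, if_pos rfl, add_tsub_cancel_of_le hq1]

theorem cylinder_bound {Ω : Type} [MeasurableSpace Ω] (μ : MeasureTheory.Measure Ω)
    (U R : ℕ → Ω → A) (G : Set Ω) (c : ENNReal) (P : A → ENNReal)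
    (hH : ∀ (k : ℕ) (a b : Fin k → A),
      μ ({ω | ∀ i : Fin k, U (i : ℕ) ω = a i ∧ R (i : ℕ) ω = b i} ∩ G)
        ≤ c * ((∏ i, P (a i)) * ∏ i, P (b i)))
    (N : ℕ) (SU SR : ℕ → Finset A) :
    μ ({ω | ∀ i : Fin N, U (i : ℕ) ω ∈ SU (i : ℕ) ∧ R (i : ℕ) ω ∈ SR (i : ℕ)} ∩ G)
      ≤ c * ((∏ i ∈ Finset.range N, ∑ x ∈ SU i, P x) *
             ∏ i ∈ Finset.range N, ∑ x ∈ SR i, P x) := by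
  classical
  set T := (Fintype.piFinset fun i : Fin N => SU (i : ℕ)) ×ˢ
    (Fintype.piFinset fun i : Fin N => SR (i : ℕ)) with hT
  have hcov : {ω | ∀ i : Fin N, U (i : ℕ) ω ∈ SU (i : ℕ) ∧ R (i : ℕ) ω ∈ SR (i : ℕ)} ∩ G ⊆
      ⋃ p ∈ T, ({ω | ∀ i : Fin N, U (i : ℕ) ω = p.1 i ∧ R (i : ℕ) ω = p.2 i} ∩ G) := by
    intro ω hω
    refine Set.mem_biUnion
      (show ((fun i : Fin N => U (i : ℕ) ω, fun i : Fin N => R (i : ℕ) ω)) ∈ T from ?_) ?_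
    · exact Finset.mem_product.2 ⟨Fintype.mem_piFinset.2 fun i => (hω.1 i).1,
        Fintype.mem_piFinset.2 fun i => (hω.1 i).2⟩
    · exact ⟨fun i => ⟨rfl, rfl⟩, hω.2⟩
  calc μ ({ω | ∀ i : Fin N, U (i : ℕ) ω ∈ SU (i : ℕ) ∧ R (i : ℕ) ω ∈ SR (i : ℕ)} ∩ G)
      ≤ ∑ p ∈ T, μ ({ω | ∀ i : Fin N, U (i : ℕ) ω = p.1 i ∧ R (i : ℕ) ω = p.2 i} ∩ G) :=
        (measure_mono hcov).trans (measure_biUnion_finset_le T _)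
    _ ≤ ∑ p ∈ T, c * ((∏ i, P (p.1 i)) * ∏ i, P (p.2 i)) :=
        Finset.sum_le_sum fun p _ => hH N p.1 p.2
    _ = c * ((∏ i ∈ Finset.range N, ∑ x ∈ SU i, P x) *
             ∏ i ∈ Finset.range N, ∑ x ∈ SR i, P x) := by
        rw [← Finset.mul_sum, hT, Finset.sum_product]
        dsimp only
        rw [← Finset.sum_mul_sum, ← Finset.prod_univ_sum, ← Finset.prod_univ_sum,
          Fin.prod_univ_eq_prod_range (fun i => ∑ x ∈ SU i, P x),
          Fin.prod_univ_eq_prod_range (fun i => ∑ x ∈ SR i, P x)]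

theorem bad_null {S A : Type} [Fintype A] (op : Set S → A → Set S) (sharp : A)
    (D : A → ENNReal) (hDsharp : D sharp = 0) (hDsum : ∑ a, D a = 1)
    (q : ENNReal) (hq0 : 0 < q) (hq1 : q ≤ 1) (h : List A)
    {Ω : Type} [MeasurableSpace Ω] (μ : MeasureTheory.Measure Ω)
    (U R : ℕ → Ω → A) (G : Set Ω) (c : ENNReal) (hc : c ≠ ⊤)
    (hH : ∀ (k' : ℕ) (a b : Fin k' → A),
      μ ({ω | ∀ i : Fin k', U (i : ℕ) ω = a i ∧ R (i : ℕ) ω = b i} ∩ G)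
        ≤ c * ((∏ i, DqFun D sharp q (a i)) * ∏ i, DqFun D sharp q (b i))) :
    μ ({ω | ¬ (setOf (SeqActiveAt op sharp h (fun m => U m ω))).Infinite} ∩ G) = 0 := by
  classical
  set P : A → ENNReal := DqFun D sharp q with hPdef
  have hPsum : ∑ x, P x = 1 := DqFun_sum D sharp hDsharp hDsum q hq1
  have hqtop : q ≠ ⊤ := ne_top_of_le_ne_top ENNReal.one_ne_top hq1
  have hmass : ∑ x ∈ Finset.univ.filter (fun x => ¬ x = sharp), P x = 1 - q := by
    have hsplit := Finset.sum_filter_add_sum_filter_not Finset.univ (fun x => x = sharp) P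
    have h1 : ∑ x ∈ Finset.univ.filter (fun x => x = sharp), P x = q := by
      rw [Finset.sum_filter]
      simp [hPdef, DqFun]
    rw [hPsum, h1] at hsplit
    exact ENNReal.eq_sub_of_add_eq hqtop (by rw [add_comm] at hsplit; exact hsplit)
  have hBN : ∀ N : ℕ, μ ({ω | ∀ j, N ≤ j → U j ω ≠ sharp} ∩ G) = 0 := by
    intro N
    have hle : ∀ L : ℕ, μ ({ω | ∀ j, N ≤ j → U j ω ≠ sharp} ∩ G) ≤ c * (1 - q) ^ L := by
      intro L
      have hcb := cylinder_bound μ U R G c P hH (N + L)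
        (fun i => if N ≤ i then Finset.univ.filter (fun x => ¬ x = sharp) else Finset.univ)
        (fun _ => Finset.univ)
      refine le_trans (le_trans (measure_mono ?_) hcb) ?_
      · intro ω hω
        refine ⟨fun i => ⟨?_, Finset.mem_univ _⟩, hω.2⟩
        by_cases hNi : N ≤ (i : ℕ)
        · rw [if_pos hNi]
          exact Finset.mem_filter.2 ⟨Finset.mem_univ _, hω.1 _ hNi⟩
        · rw [if_neg hNi]
          exact Finset.mem_univ _
      · have hU : (∏ i ∈ Finset.range (N + L),
            ∑ x ∈ (if N ≤ i then Finset.univ.filter (fun x => ¬ x = sharp)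
              else Finset.univ), P x) = (1 - q) ^ L := by
          rw [Finset.prod_range_add]
          have e1 : (∏ i ∈ Finset.range N,
              ∑ x ∈ (if N ≤ i then Finset.univ.filter (fun x => ¬ x = sharp)
                else Finset.univ), P x) = 1 := by
            refine Finset.prod_eq_one fun i hi => ?_
            rw [if_neg (by simpa using Finset.mem_range.1 hi)]
            exact hPsum
          have e2 : (∏ x ∈ Finset.range L,
              ∑ y ∈ (if N ≤ N + x then Finset.univ.filter (fun x => ¬ x = sharp)
                else Finset.univ), P y) = (1 - q) ^ L := by
            have hterm : ∀ x ∈ Finset.range L,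
                (∑ y ∈ (if N ≤ N + x then Finset.univ.filter (fun x => ¬ x = sharp)
                  else Finset.univ), P y) = 1 - q := fun x _ => by
              rw [if_pos (by omega)]; exact hmass
            rw [Finset.prod_congr rfl hterm, Finset.prod_const, Finset.card_range]
          rw [e1, e2, one_mul]
        have hR : (∏ _i ∈ Finset.range (N + L), ∑ x ∈ Finset.univ, P x) = 1 := by
          simp [hPsum]
        rw [hU, hR, mul_one]
    have htend : Filter.Tendsto (fun L : ℕ => c * (1 - q) ^ L) Filter.atTop (nhds 0) := by
      have h1 : (1 : ENNReal) - q < 1 :=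
        ENNReal.sub_lt_self ENNReal.one_ne_top one_ne_zero hq0.ne'
      simpa using ENNReal.Tendsto.const_mul
        (ENNReal.tendsto_pow_atTop_nhds_zero_of_lt_one h1) (Or.inr hc)
    exact le_antisymm (ge_of_tendsto' htend hle) zero_le
  have hsub : {ω | ¬ (setOf (SeqActiveAt op sharp h (fun m => U m ω))).Infinite} ∩ G ⊆
      ⋃ N : ℕ, ({ω | ∀ j, N ≤ j → U j ω ≠ sharp} ∩ G) := by
    intro ω hω
    have hfin : (setOf (SeqActiveAt op sharp h (fun m => U m ω))).Finite :=
      Set.not_infinite.1 hω.1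
    obtain ⟨b, hb⟩ := hfin.bddAbove
    refine Set.mem_iUnion.2 ⟨b + 1, ⟨?_, hω.2⟩⟩
    intro j hj hsharpeq
    have hact : SeqActiveAt op sharp h (fun m => U m ω) j := Or.inl hsharpeq
    exact absurd (hb hact) (by omega)
  refine le_antisymm ?_ zero_le
  calc μ ({ω | ¬ (setOf (SeqActiveAt op sharp h (fun m => U m ω))).Infinite} ∩ G)
      ≤ ∑' N : ℕ, μ ({ω | ∀ j, N ≤ j → U j ω ≠ sharp} ∩ G) :=
        (measure_mono hsub).trans (measure_iUnion_le _)
    _ = 0 := by simp [hBN]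

theorem prod_range_ext {A : Type} (P : A → ENNReal) {k : ℕ} (a : Fin k → A) (a'' : ℕ → A)
    (hext : ∀ i : Fin k, a'' (i : ℕ) = a i) :
    ∏ i ∈ Finset.range k, P (a'' i) = ∏ i, P (a i) := by
  rw [← Fin.prod_univ_eq_prod_range (fun i => P (a'' i))]
  exact Finset.prod_congr rfl fun j _ => by rw [hext j]

theorem aux {S A : Type} [Fintype A] (op : Set S → A → Set S) (sharp : A)
    (D : A → ENNReal) (hDsharp : D sharp = 0) (hDsum : ∑ a, D a = 1)
    (q : ENNReal) (hq0 : 0 < q) (hq1 : q ≤ 1) :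
    ∀ (k : ℕ) (h : List A) {Ω : Type} [MeasurableSpace Ω]
      (μ : MeasureTheory.Measure Ω) (U R : ℕ → Ω → A) (G : Set Ω) (c : ENNReal),
      c ≠ ⊤ →
      (∀ (k' : ℕ) (a b : Fin k' → A),
        μ ({ω | ∀ i : Fin k', U (i : ℕ) ω = a i ∧ R (i : ℕ) ω = b i} ∩ G)
          ≤ c * ((∏ i, DqFun D sharp q (a i)) * ∏ i, DqFun D sharp q (b i))) →
      ∀ a : Fin k → A,
        μ ({ω | ∀ i : Fin k, expandSeq op sharp h
            (contractSeq op sharp h (fun m => U m ω)) (fun m => R m ω) (i : ℕ) = a i} ∩ G)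
          ≤ c * ∏ i, DqFun D sharp q (a i) := by
  intro k
  induction k with
  | zero =>
      intro h Ω _ μ U R G c hc hH a
      simpa using hH 0 a a
  | succ k IH =>
      intro h Ω instΩ μ U R G c hc hH a
      classical
      set P : A → ENNReal := DqFun D sharp q with hPdef
      have hPsum : ∑ x, P x = 1 := DqFun_sum D sharp hDsharp hDsum q hq1
      have hmass_le : ∀ T : Finset A, (∑ x ∈ T, P x) ≤ 1 := by
        intro T
        rw [← hPsum]
        exact Finset.sum_le_sum_of_subset (Finset.subset_univ T)
      have hmass_ne_top : ∀ T : Finset A, (∑ x ∈ T, P x) ≠ ⊤ :=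
        fun T => ne_top_of_le_ne_top ENNReal.one_ne_top (hmass_le T)
      have hP_le : ∀ x : A, P x ≤ 1 := by
        intro x
        rw [← hPsum]
        exact Finset.single_le_sum (fun i _ => zero_le) (Finset.mem_univ x)
      have hP_ne_top : ∀ x : A, P x ≠ ⊤ :=
        fun x => ne_top_of_le_ne_top ENNReal.one_ne_top (hP_le x)
      set AF : Finset A := Finset.univ.filter (fun x => IsActive op sharp h x) with hAFdef
      set PF : Finset A := Finset.univ.filter (fun x => ¬ IsActive op sharp h x) with hPFdef
      set AM : ENNReal := ∑ x ∈ AF, P x with hAMdef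
      set PM : ENNReal := ∑ x ∈ PF, P x with hPMdef
      have hAMPM : AM + PM = 1 := by
        rw [hAMdef, hPMdef, hAFdef, hPFdef, Finset.sum_filter_add_sum_filter_not, hPsum]
      have hAM_ne_top : AM ≠ ⊤ := hmass_ne_top AF
      have hPM_ne_top : PM ≠ ⊤ := hmass_ne_top PF
      have hq_le_AM : q ≤ AM := by
        have hsharpmem : sharp ∈ AF :=
          Finset.mem_filter.2 ⟨Finset.mem_univ _, Or.inl rfl⟩
        calc q = P sharp := by simp [hPdef, DqFun]
          _ ≤ AM := Finset.single_le_sum (fun i _ => zero_le) hsharpmem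
      have hAM_ne0 : AM ≠ 0 := (lt_of_lt_of_le hq0 hq_le_AM).ne'
      have hAMeq : 1 - PM = AM :=
        (ENNReal.eq_sub_of_add_eq hPM_ne_top hAMPM).symm
      have hprodsplit : (∏ i, P (a i)) = P (a 0) * ∏ j : Fin k, P (a j.succ) :=
        Fin.prod_univ_succ fun i => P (a i)
      have hBad : μ ({ω | ¬ (setOf (SeqActiveAt op sharp h (fun m => U m ω))).Infinite} ∩ G) = 0 :=
        bad_null op sharp D hDsharp hDsum q hq0 hq1 h μ U R G c hc hH
      by_cases ha0 : IsActive op sharp h (a 0)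
      · -- active first letter
        have hcover : {ω | ∀ i : Fin (k+1), expandSeq op sharp h
              (contractSeq op sharp h (fun m => U m ω)) (fun m => R m ω) (i : ℕ) = a i} ∩ G ⊆
            ({ω | ¬ (setOf (SeqActiveAt op sharp h (fun m => U m ω))).Infinite} ∩ G) ∪
            ⋃ n : ℕ, ({ω | ∀ i : Fin k, expandSeq op sharp (h ++ [a 0])
                (contractSeq op sharp (h ++ [a 0]) (fun m => U (n+1+m) ω))
                (fun m => R (m+1) ω) (i : ℕ) = a i.succ} ∩
              (G ∩ {ω | IsActive op sharp h (R 0 ω) ∧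
                (∀ i < n, ¬ IsActive op sharp h (U i ω)) ∧ U n ω = a 0})) := by
          intro ω hω
          by_cases hbad : (setOf (SeqActiveAt op sharp h (fun m => U m ω))).Infinite
          swap
          · exact Or.inl ⟨hbad, hω.2⟩
          right
          have hinf := hbad
          have hout0 : expandSeq op sharp h
              (contractSeq op sharp h (fun m => U m ω)) (fun m => R m ω) 0 = a 0 := by
            simpa using hω.1 0
          have hr0 : IsActive op sharp h (R 0 ω) := by
            by_contra hr0
            rw [expandSeq_zero, if_neg hr0] at hout0
            rw [← hout0] at ha0
            exact hr0 ha0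
          set n : ℕ := Nat.nth (SeqActiveAt op sharp h (fun m => U m ω)) 0 with hndef
          have hn : SeqActiveAt op sharp h (fun m => U m ω) n :=
            Nat.nth_mem_of_infinite hinf 0
          have hmin : ∀ i < n, ¬ SeqActiveAt op sharp h (fun m => U m ω) i := by
            intro i hi hpi
            have hle := Nat.sInf_le (show i ∈ setOf (SeqActiveAt op sharp h (fun m => U m ω)) from hpi)
            have hn0 : n = sInf (setOf (SeqActiveAt op sharp h (fun m => U m ω))) := by
              rw [hndef]; exact Nat.nth_zero
            omega
          have hminIs : ∀ i < n, ¬ IsActive op sharp h (U i ω) := by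
            intro i hi hIs
            exact hmin i hi ((seqActiveAt_iff_of_passive_prefix op sharp
              (fun i' hi' => hmin i' (hi'.trans hi))).2 hIs)
          have hx0 : contractSeq op sharp h (fun m => U m ω) 0 = U n ω :=
            contractSeq_zero op sharp hmin hn
          have hun : U n ω = a 0 := by
            rw [expandSeq_zero, if_pos hr0, hx0] at hout0
            exact hout0
          refine Set.mem_iUnion.2 ⟨n, ⟨?_, hω.2, hr0, hminIs, hun⟩⟩
          intro i
          have houti := hω.1 i.succ
          rw [Fin.val_succ] at houti
          rw [expandSeq_succ_active op sharp h
            (contractSeq op sharp h (fun m => U m ω)) (fun m => R m ω) hr0 (i : ℕ)] at houti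
          rw [hx0, hun] at houti
          have hfuneq : (fun m => contractSeq op sharp h (fun m' => U m' ω) (m+1))
              = contractSeq op sharp (h ++ [a 0]) (fun m => U (n+1+m) ω) := by
            funext m
            have h2 := contractSeq_succ_shift op sharp (h := h) (u := fun m' => U m' ω)
              hinf hmin hn m
            rw [hun] at h2
            exact h2
          rw [hfuneq] at houti
          exact houti
        have hpiece : ∀ n : ℕ,
            μ ({ω | ∀ i : Fin k, expandSeq op sharp (h ++ [a 0])
                (contractSeq op sharp (h ++ [a 0]) (fun m => U (n+1+m) ω))
                (fun m => R (m+1) ω) (i : ℕ) = a i.succ} ∩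
              (G ∩ {ω | IsActive op sharp h (R 0 ω) ∧
                (∀ i < n, ¬ IsActive op sharp h (U i ω)) ∧ U n ω = a 0}))
              ≤ (c * (PM ^ n * (P (a 0) * AM))) * ∏ j : Fin k, P (a j.succ) := by
          intro n
          have hc' : c * (PM ^ n * (P (a 0) * AM)) ≠ ⊤ :=
            ENNReal.mul_ne_top hc (ENNReal.mul_ne_top (ENNReal.pow_ne_top hPM_ne_top)
              (ENNReal.mul_ne_top (hP_ne_top (a 0)) hAM_ne_top))
          have hH' : ∀ (k' : ℕ) (a' b' : Fin k' → A),
              μ ({ω | ∀ i : Fin k', U (n+1+(i:ℕ)) ω = a' i ∧ R ((i:ℕ)+1) ω = b' i} ∩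
                (G ∩ {ω | IsActive op sharp h (R 0 ω) ∧
                  (∀ i < n, ¬ IsActive op sharp h (U i ω)) ∧ U n ω = a 0}))
                ≤ (c * (PM ^ n * (P (a 0) * AM))) * ((∏ i, P (a' i)) * ∏ i, P (b' i)) := by
            intro k' a' b'
            set a'' : ℕ → A := fun i => if hh : i < k' then a' ⟨i, hh⟩ else sharp with ha''def
            set b'' : ℕ → A := fun i => if hh : i < k' then b' ⟨i, hh⟩ else sharp with hb''def
            have hexta : ∀ i : Fin k', a'' (i : ℕ) = a' i := fun i => by
              simp [ha''def, i.isLt]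
            have hextb : ∀ i : Fin k', b'' (i : ℕ) = b' i := fun i => by
              simp [hb''def, i.isLt]
            have hGsub : ∀ (kk : ℕ) (aa bb : Fin kk → A),
                μ ({ω | ∀ i : Fin kk, U (i : ℕ) ω = aa i ∧ R (i : ℕ) ω = bb i} ∩
                  (G ∩ {ω | IsActive op sharp h (R 0 ω) ∧
                    (∀ i < n, ¬ IsActive op sharp h (U i ω)) ∧ U n ω = a 0}))
                  ≤ c * ((∏ i, P (aa i)) * ∏ i, P (bb i)) := by
              intro kk aa bb
              refine le_trans (measure_mono ?_) (hH kk aa bb)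
              exact Set.inter_subset_inter_right _ Set.inter_subset_left
            have hcb := cylinder_bound μ U R
              (G ∩ {ω | IsActive op sharp h (R 0 ω) ∧
                (∀ i < n, ¬ IsActive op sharp h (U i ω)) ∧ U n ω = a 0})
              c P hGsub (n+1+k')
              (fun i => if i < n then PF else if i = n then {a 0} else {a'' (i - (n+1))})
              (fun i => if i = 0 then AF else if i - 1 < k' then {b'' (i - 1)} else Finset.univ)
            refine le_trans (le_trans (measure_mono ?_) hcb) (le_of_eq ?_)
            · intro ω hω
              obtain ⟨hatom, hG2, hr0, hpass, hun⟩ := hω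
              refine ⟨fun i => ⟨?_, ?_⟩, hG2, hr0, hpass, hun⟩
              · rcases lt_trichotomy (i : ℕ) n with hlt | heq | hgt
                · rw [if_pos hlt]
                  exact Finset.mem_filter.2 ⟨Finset.mem_univ _, hpass _ hlt⟩
                · rw [if_neg (by omega), if_pos heq]
                  refine Finset.mem_singleton.2 ?_
                  rw [heq]
                  exact hun
                · rw [if_neg (by omega), if_neg (by omega)]
                  have hj : (i : ℕ) - (n+1) < k' := by
                    have := i.isLt
                    omega
                  have h1 := (hatom ⟨(i : ℕ) - (n+1), hj⟩).1
                  have hidx : n+1+((i : ℕ)-(n+1)) = (i : ℕ) := by omega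
                  rw [hidx] at h1
                  have h2 : a'' ((i : ℕ) - (n+1)) = a' ⟨(i : ℕ) - (n+1), hj⟩ := dif_pos hj
                  refine Finset.mem_singleton.2 ?_
                  rw [h2]
                  exact h1
              · by_cases h0 : (i : ℕ) = 0
                · rw [if_pos h0]
                  refine Finset.mem_filter.2 ⟨Finset.mem_univ _, ?_⟩
                  rw [h0]
                  exact hr0
                · rw [if_neg h0]
                  by_cases hik : (i : ℕ) - 1 < k'
                  · rw [if_pos hik]
                    have h1 := (hatom ⟨(i : ℕ) - 1, hik⟩).2
                    have hidx : ((i : ℕ) - 1) + 1 = (i : ℕ) := by omega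
                    rw [hidx] at h1
                    have h2 : b'' ((i : ℕ) - 1) = b' ⟨(i : ℕ) - 1, hik⟩ := dif_pos hik
                    refine Finset.mem_singleton.2 ?_
                    rw [h2]
                    exact h1
                  · rw [if_neg hik]
                    exact Finset.mem_univ _
            · have hSU : (∏ i ∈ Finset.range (n+1+k'),
                  ∑ x ∈ (if i < n then PF else if i = n then {a 0}
                    else {a'' (i - (n+1))}), P x)
                  = PM ^ n * (P (a 0) * ∏ i, P (a' i)) := by
                rw [show n+1+k' = n + (1+k') by omega, Finset.prod_range_add]
                have e1 : (∏ i ∈ Finset.range n,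
                    ∑ x ∈ (if i < n then PF else if i = n then {a 0}
                      else {a'' (i - (n+1))}), P x) = PM ^ n := by
                  have hconst : ∀ i ∈ Finset.range n,
                      (∑ x ∈ (if i < n then PF else if i = n then {a 0}
                        else {a'' (i - (n+1))}), P x) = PM := fun i hi => by
                    rw [if_pos (Finset.mem_range.1 hi)]
                  rw [Finset.prod_congr rfl hconst, Finset.prod_const, Finset.card_range]
                have e2 : (∏ x ∈ Finset.range (1+k'),
                    ∑ y ∈ (if n+x < n then PF else if n+x = n then {a 0}
                      else {a'' (n+x - (n+1))}), P y) = P (a 0) * ∏ i, P (a' i) := by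
                  rw [show 1+k' = k'+1 by omega, Finset.prod_range_succ']
                  have f0 : (∑ y ∈ (if n+0 < n then PF else if n+0 = n then {a 0}
                      else {a'' (n+0 - (n+1))}), P y) = P (a 0) := by
                    rw [if_neg (by omega), if_pos (by omega), Finset.sum_singleton]
                  have fs : ∀ i ∈ Finset.range k',
                      (∑ y ∈ (if n+(i+1) < n then PF else if n+(i+1) = n then {a 0}
                        else {a'' (n+(i+1) - (n+1))}), P y) = P (a'' i) := fun i _ => by
                    rw [if_neg (by omega), if_neg (by omega),
                      show n+(i+1) - (n+1) = i by omega, Finset.sum_singleton]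
                  rw [Finset.prod_congr rfl fs, f0, prod_range_ext P a' a'' hexta]
                  exact mul_comm _ _
                rw [e1, e2]
              have hSR : (∏ i ∈ Finset.range (n+1+k'),
                  ∑ x ∈ (if i = 0 then AF else if i - 1 < k' then {b'' (i - 1)}
                    else Finset.univ), P x) = AM * ∏ i, P (b' i) := by
                rw [show n+1+k' = (k'+n)+1 by omega, Finset.prod_range_succ']
                have f0 : (∑ x ∈ (if (0:ℕ) = 0 then AF else if 0 - 1 < k' then {b'' (0 - 1)}
                    else Finset.univ), P x) = AM := by
                  rw [if_pos rfl]
                have fs : (∏ i ∈ Finset.range (k'+n),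
                    ∑ x ∈ (if i+1 = 0 then AF else if (i+1) - 1 < k' then {b'' ((i+1) - 1)}
                      else Finset.univ), P x) = ∏ i, P (b' i) := by
                  rw [Finset.prod_range_add]
                  have g1 : ∀ i ∈ Finset.range k',
                      (∑ x ∈ (if i+1 = 0 then AF else if (i+1) - 1 < k'
                        then {b'' ((i+1) - 1)} else Finset.univ), P x) = P (b'' i) := fun i hi => by
                    rw [if_neg (by omega),
                      if_pos (show (i+1) - 1 < k' by
                        have := Finset.mem_range.1 hi; omega),
                      show (i+1) - 1 = i by omega, Finset.sum_singleton]
                  have g2 : ∀ x ∈ Finset.range n,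
                      (∑ y ∈ (if (k'+x)+1 = 0 then AF else if ((k'+x)+1) - 1 < k'
                        then {b'' (((k'+x)+1) - 1)} else Finset.univ), P y) = 1 := fun x _ => by
                    rw [if_neg (by omega), if_neg (by omega)]
                    exact hPsum
                  rw [Finset.prod_congr rfl g1, Finset.prod_congr rfl g2,
                    Finset.prod_const_one, mul_one, prod_range_ext P b' b'' hextb]
                rw [fs, f0, mul_comm]
              rw [hSU, hSR]
              ring
          exact IH (h ++ [a 0]) μ (fun m ω => U (n+1+m) ω) (fun m ω => R (m+1) ω)
            (G ∩ {ω | IsActive op sharp h (R 0 ω) ∧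
              (∀ i < n, ¬ IsActive op sharp h (U i ω)) ∧ U n ω = a 0})
            (c * (PM ^ n * (P (a 0) * AM))) hc' hH' (fun j => a j.succ)
        refine le_trans (measure_mono hcover) ?_
        refine le_trans (measure_union_le _ _) ?_
        rw [hBad, zero_add]
        refine le_trans (measure_iUnion_le _) ?_
        refine le_trans (ENNReal.tsum_le_tsum hpiece) ?_
        have hgeo : (∑' n : ℕ, (c * (PM ^ n * (P (a 0) * AM))) * ∏ j : Fin k, P (a j.succ))
            = (c * (P (a 0) * AM * ∏ j : Fin k, P (a j.succ))) * ∑' n : ℕ, PM ^ n := by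
          rw [← ENNReal.tsum_mul_left]
          exact tsum_congr fun n => by ring
        refine le_of_eq ?_
        rw [hgeo, ENNReal.tsum_geometric, hAMeq]
        calc (c * (P (a 0) * AM * ∏ j : Fin k, P (a j.succ))) * AM⁻¹
            = (c * (P (a 0) * ∏ j : Fin k, P (a j.succ))) * (AM * AM⁻¹) := by ring
          _ = c * (P (a 0) * ∏ j : Fin k, P (a j.succ)) := by
              rw [ENNReal.mul_inv_cancel hAM_ne0 hAM_ne_top, mul_one]
          _ = c * ∏ i, P (a i) := by rw [hprodsplit]
      · -- passive first letter
        have hcover : {ω | ∀ i : Fin (k+1), expandSeq op sharp h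
              (contractSeq op sharp h (fun m => U m ω)) (fun m => R m ω) (i : ℕ) = a i} ∩ G ⊆
            ({ω | ¬ (setOf (SeqActiveAt op sharp h (fun m => U m ω))).Infinite} ∩ G) ∪
            ({ω | ∀ i : Fin k, expandSeq op sharp (h ++ [a 0])
                (contractSeq op sharp (h ++ [a 0]) (fun m => U m ω))
                (fun m => R (m+1) ω) (i : ℕ) = a i.succ} ∩ (G ∩ {ω | R 0 ω = a 0})) := by
          intro ω hω
          by_cases hbad : (setOf (SeqActiveAt op sharp h (fun m => U m ω))).Infinite
          swap
          · exact Or.inl ⟨hbad, hω.2⟩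
          right
          have hout0 : expandSeq op sharp h
              (contractSeq op sharp h (fun m => U m ω)) (fun m => R m ω) 0 = a 0 := by
            simpa using hω.1 0
          have hr0 : ¬ IsActive op sharp h (R 0 ω) := by
            intro hr0
            set n : ℕ := Nat.nth (SeqActiveAt op sharp h (fun m => U m ω)) 0 with hndef
            have hn : SeqActiveAt op sharp h (fun m => U m ω) n :=
              Nat.nth_mem_of_infinite hbad 0
            have hmin : ∀ i < n, ¬ SeqActiveAt op sharp h (fun m => U m ω) i := by
              intro i hi hpi
              have hle := Nat.sInf_le
                (show i ∈ setOf (SeqActiveAt op sharp h (fun m => U m ω)) from hpi)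
              have hn0 : n = sInf (setOf (SeqActiveAt op sharp h (fun m => U m ω))) := by
                rw [hndef]; exact Nat.nth_zero
              omega
            have hx0 : contractSeq op sharp h (fun m => U m ω) 0 = U n ω :=
              contractSeq_zero op sharp hmin hn
            rw [expandSeq_zero, if_pos hr0, hx0] at hout0
            have hactn : IsActive op sharp h (U n ω) :=
              (seqActiveAt_iff_of_passive_prefix op sharp hmin).1 hn
            rw [hout0] at hactn
            exact ha0 hactn
          have hR0 : R 0 ω = a 0 := by
            rw [expandSeq_zero, if_neg hr0] at hout0
            exact hout0
          refine ⟨?_, hω.2, hR0⟩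
          intro i
          have houti := hω.1 i.succ
          rw [Fin.val_succ] at houti
          rw [expandSeq_succ_passive op sharp h
            (contractSeq op sharp h (fun m => U m ω)) (fun m => R m ω) hr0 (i : ℕ)] at houti
          rw [hR0] at houti
          have hctr : contractSeq op sharp h (fun m => U m ω)
              = contractSeq op sharp (h ++ [a 0]) (fun m => U m ω) :=
            (contractSeq_congr op sharp (wordOp_concat_of_passive op sharp ha0) _).symm
          rw [hctr] at houti
          exact houti
        have hc' : c * P (a 0) ≠ ⊤ := ENNReal.mul_ne_top hc (hP_ne_top (a 0))
        have hH' : ∀ (k' : ℕ) (a' b' : Fin k' → A),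
            μ ({ω | ∀ i : Fin k', U (i : ℕ) ω = a' i ∧ R ((i : ℕ)+1) ω = b' i} ∩
              (G ∩ {ω | R 0 ω = a 0}))
              ≤ (c * P (a 0)) * ((∏ i, P (a' i)) * ∏ i, P (b' i)) := by
          intro k' a' b'
          set a'' : ℕ → A := fun i => if hh : i < k' then a' ⟨i, hh⟩ else sharp with ha''def
          set b'' : ℕ → A := fun i => if hh : i < k' then b' ⟨i, hh⟩ else sharp with hb''def
          have hexta : ∀ i : Fin k', a'' (i : ℕ) = a' i := fun i => by
            simp [ha''def, i.isLt]
          have hextb : ∀ i : Fin k', b'' (i : ℕ) = b' i := fun i => by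
            simp [hb''def, i.isLt]
          have hGsub : ∀ (kk : ℕ) (aa bb : Fin kk → A),
              μ ({ω | ∀ i : Fin kk, U (i : ℕ) ω = aa i ∧ R (i : ℕ) ω = bb i} ∩
                (G ∩ {ω | R 0 ω = a 0}))
                ≤ c * ((∏ i, P (aa i)) * ∏ i, P (bb i)) := by
            intro kk aa bb
            refine le_trans (measure_mono ?_) (hH kk aa bb)
            exact Set.inter_subset_inter_right _ Set.inter_subset_left
          have hcb := cylinder_bound μ U R (G ∩ {ω | R 0 ω = a 0}) c P hGsub (k'+1)
            (fun i => if i < k' then {a'' i} else Finset.univ)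
            (fun i => if i = 0 then {a 0} else if i - 1 < k' then {b'' (i - 1)}
              else Finset.univ)
          refine le_trans (le_trans (measure_mono ?_) hcb) (le_of_eq ?_)
          · intro ω hω
            obtain ⟨hatom, hG2, hR0⟩ := hω
            refine ⟨fun i => ⟨?_, ?_⟩, hG2, hR0⟩
            · by_cases hik : (i : ℕ) < k'
              · rw [if_pos hik]
                have h1 := (hatom ⟨(i : ℕ), hik⟩).1
                rw [show a'' (i : ℕ) = a' ⟨(i : ℕ), hik⟩ from dif_pos hik]
                exact Finset.mem_singleton.2 h1
              · rw [if_neg hik]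
                exact Finset.mem_univ _
            · by_cases h0 : (i : ℕ) = 0
              · rw [if_pos h0]
                refine Finset.mem_singleton.2 ?_
                rw [h0]
                exact hR0
              · rw [if_neg h0]
                have hik : (i : ℕ) - 1 < k' := by
                  have := i.isLt
                  omega
                rw [if_pos hik]
                have h1 := (hatom ⟨(i : ℕ) - 1, hik⟩).2
                have hidx : ((i : ℕ) - 1) + 1 = (i : ℕ) := by omega
                rw [hidx] at h1
                rw [show b'' ((i : ℕ) - 1) = b' ⟨(i : ℕ) - 1, hik⟩ from dif_pos hik]
                exact Finset.mem_singleton.2 h1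
          · have hSU : (∏ i ∈ Finset.range (k'+1),
                ∑ x ∈ (if i < k' then {a'' i} else Finset.univ), P x) = ∏ i, P (a' i) := by
              rw [Finset.prod_range_succ, if_neg (lt_irrefl k'), hPsum, mul_one]
              have hconst : ∀ i ∈ Finset.range k',
                  (∑ x ∈ (if i < k' then {a'' i} else Finset.univ), P x)
                    = P (a'' i) := fun i hi => by
                rw [if_pos (Finset.mem_range.1 hi), Finset.sum_singleton]
              rw [Finset.prod_congr rfl hconst, prod_range_ext P a' a'' hexta]
            have hSR : (∏ i ∈ Finset.range (k'+1),
                ∑ x ∈ (if i = 0 then {a 0} else if i - 1 < k' then {b'' (i - 1)}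
                  else Finset.univ), P x) = P (a 0) * ∏ i, P (b' i) := by
              rw [Finset.prod_range_succ']
              have f0 : (∑ x ∈ (if (0:ℕ) = 0 then {a 0} else if 0 - 1 < k'
                  then {b'' (0 - 1)} else Finset.univ), P x) = P (a 0) := by
                rw [if_pos rfl, Finset.sum_singleton]
              have fs : ∀ i ∈ Finset.range k',
                  (∑ x ∈ (if i+1 = 0 then {a 0} else if (i+1) - 1 < k'
                    then {b'' ((i+1) - 1)} else Finset.univ), P x) = P (b'' i) := fun i hi => by
                rw [if_neg (by omega),
                  if_pos (show (i+1) - 1 < k' by have := Finset.mem_range.1 hi; omega),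
                  show (i+1) - 1 = i by omega, Finset.sum_singleton]
              rw [Finset.prod_congr rfl fs, f0, prod_range_ext P b' b'' hextb, mul_comm]
            rw [hSU, hSR]
            ring
        refine le_trans (measure_mono hcover) ?_
        refine le_trans (measure_union_le _ _) ?_
        rw [hBad, zero_add]
        refine le_trans (IH (h ++ [a 0]) μ U (fun m ω => R (m+1) ω)
          (G ∩ {ω | R 0 ω = a 0}) (c * P (a 0)) hc' hH' (fun j => a j.succ)) ?_
        refine le_of_eq ?_
        rw [hprodsplit]
        ring

end Measure

end Stmt8

/-- expansion inverts contraction in distribution: if `U` is an i.i.d.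
`D_q`-sequence (and the expansion is driven by an independent i.i.d. `D_q`-source `R`),
then `e_q^h(c^h(U))` is again i.i.d. `D_q^⊗ℕ`. -/
theorem stmt8 {S A : Type} [Fintype A] (op : Set S → A → Set S) (sharp : A)
    (D : A → ENNReal) (hDsharp : D sharp = 0) (hDsum : ∑ a, D a = 1)
    (q : ENNReal) (hq0 : 0 < q) (hq1 : q ≤ 1) (h : List A)
    {Ω : Type} [MeasurableSpace Ω] (μ : Measure Ω) [IsProbabilityMeasure μ]
    (U R : ℕ → Ω → A)
    (hiid : ∀ (k : ℕ) (a b : Fin k → A),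
      μ {ω | ∀ i : Fin k, U (i : ℕ) ω = a i ∧ R (i : ℕ) ω = b i}
        = (∏ i, DqFun D sharp q (a i)) * ∏ i, DqFun D sharp q (b i)) :
    ∀ (k : ℕ) (a : Fin k → A),
      μ {ω | ∀ i : Fin k,
          expandSeq op sharp h
            (contractSeq op sharp h (fun m => U m ω)) (fun m => R m ω) (i : ℕ) = a i}
        = ∏ i, DqFun D sharp q (a i) := by
  intro k a
  classical
  have hub : ∀ a' : Fin k → A,
      μ {ω | ∀ i : Fin k, expandSeq op sharp h
          (contractSeq op sharp h (fun m => U m ω)) (fun m => R m ω) (i : ℕ) = a' i}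
        ≤ ∏ i, DqFun D sharp q (a' i) := by
    intro a'
    have hH : ∀ (k' : ℕ) (aa bb : Fin k' → A),
        μ ({ω | ∀ i : Fin k', U (i : ℕ) ω = aa i ∧ R (i : ℕ) ω = bb i} ∩ Set.univ)
          ≤ 1 * ((∏ i, DqFun D sharp q (aa i)) * ∏ i, DqFun D sharp q (bb i)) := by
      intro k' aa bb
      rw [Set.inter_univ, one_mul, hiid]
    have hx := Stmt8.aux op sharp D hDsharp hDsum q hq0 hq1 k h μ U R Set.univ 1
      ENNReal.one_ne_top hH a'
    rw [Set.inter_univ, one_mul] at hx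
    exact hx
  have hPsum : ∑ x, DqFun D sharp q x = 1 := Stmt8.DqFun_sum D sharp hDsharp hDsum q hq1
  have hβsum : ∑ a' : Fin k → A, ∏ i, DqFun D sharp q (a' i) = 1 := by
    calc ∑ a' : Fin k → A, ∏ i, DqFun D sharp q (a' i)
        = ∑ a' ∈ Fintype.piFinset (fun _ : Fin k => (Finset.univ : Finset A)),
            ∏ i, DqFun D sharp q (a' i) := by rw [Fintype.piFinset_univ]
      _ = ∏ _i : Fin k, ∑ x : A, DqFun D sharp q x :=
          (Finset.prod_univ_sum _ _).symm
      _ = 1 := by simp [hPsum]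
  have hβ_le_one : ∀ a' : Fin k → A, (∏ i, DqFun D sharp q (a' i)) ≤ 1 := by
    intro a'
    rw [← hβsum]
    exact Finset.single_le_sum (f := fun a'' : Fin k → A => ∏ i, DqFun D sharp q (a'' i))
      (fun _ _ => zero_le) (Finset.mem_univ a')
  have hβ_ne_top : (∏ i, DqFun D sharp q (a i)) ≠ ⊤ :=
    ne_top_of_le_ne_top ENNReal.one_ne_top (hβ_le_one a)
  have hunion : (Set.univ : Set Ω) ⊆
      ({ω | ∀ i : Fin k, expandSeq op sharp h
          (contractSeq op sharp h (fun m => U m ω)) (fun m => R m ω) (i : ℕ) = a i}) ∪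
      ⋃ a' ∈ Finset.univ.erase a,
        ({ω | ∀ i : Fin k, expandSeq op sharp h
          (contractSeq op sharp h (fun m => U m ω)) (fun m => R m ω) (i : ℕ) = a' i}) := by
    intro ω _
    by_cases hae : (fun i : Fin k => expandSeq op sharp h
        (contractSeq op sharp h (fun m => U m ω)) (fun m => R m ω) (i : ℕ)) = a
    · left
      intro i
      rw [← hae]
    · right
      refine Set.mem_biUnion (Finset.mem_erase.2 ⟨hae, Finset.mem_univ _⟩) ?_
      intro i
      rfl
  have hsum_erase : ∑ a' ∈ Finset.univ.erase a, ∏ i, DqFun D sharp q (a' i)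
      = 1 - ∏ i, DqFun D sharp q (a i) := by
    refine ENNReal.eq_sub_of_add_eq hβ_ne_top ?_
    rw [add_comm]
    exact (Finset.add_sum_erase Finset.univ
      (fun a' : Fin k → A => ∏ i, DqFun D sharp q (a' i)) (Finset.mem_univ a)).trans hβsum
  have hlow : (1 : ENNReal) ≤
      μ {ω | ∀ i : Fin k, expandSeq op sharp h
          (contractSeq op sharp h (fun m => U m ω)) (fun m => R m ω) (i : ℕ) = a i}
        + (1 - ∏ i, DqFun D sharp q (a i)) := by
    calc (1 : ENNReal) = μ Set.univ := measure_univ.symm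
      _ ≤ _ := measure_mono hunion
      _ ≤ μ {ω | ∀ i : Fin k, expandSeq op sharp h
            (contractSeq op sharp h (fun m => U m ω)) (fun m => R m ω) (i : ℕ) = a i}
          + μ (⋃ a' ∈ Finset.univ.erase a,
            ({ω | ∀ i : Fin k, expandSeq op sharp h
              (contractSeq op sharp h (fun m => U m ω)) (fun m => R m ω) (i : ℕ) = a' i})) :=
          measure_union_le _ _
      _ ≤ μ {ω | ∀ i : Fin k, expandSeq op sharp h
            (contractSeq op sharp h (fun m => U m ω)) (fun m => R m ω) (i : ℕ) = a i}
          + ∑ a' ∈ Finset.univ.erase a,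
              μ ({ω | ∀ i : Fin k, expandSeq op sharp h
                (contractSeq op sharp h (fun m => U m ω)) (fun m => R m ω) (i : ℕ) = a' i}) :=
          add_le_add_right (measure_biUnion_finset_le _ _) _
      _ ≤ μ {ω | ∀ i : Fin k, expandSeq op sharp h
            (contractSeq op sharp h (fun m => U m ω)) (fun m => R m ω) (i : ℕ) = a i}
          + ∑ a' ∈ Finset.univ.erase a, ∏ i, DqFun D sharp q (a' i) :=
          add_le_add_right (Finset.sum_le_sum fun a' _ => hub a') _
      _ = _ := by rw [hsum_erase]
  have hfin : (1 : ENNReal) - ∏ i, DqFun D sharp q (a i) ≠ ⊤ :=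
    ne_top_of_le_ne_top ENNReal.one_ne_top tsub_le_self
  have hba : (∏ i, DqFun D sharp q (a i)) + (1 - ∏ i, DqFun D sharp q (a i)) = 1 :=
    add_tsub_cancel_of_le (hβ_le_one a)
  have hstep : (∏ i, DqFun D sharp q (a i)) + (1 - ∏ i, DqFun D sharp q (a i))
      ≤ μ {ω | ∀ i : Fin k, expandSeq op sharp h
          (contractSeq op sharp h (fun m => U m ω)) (fun m => R m ω) (i : ℕ) = a i}
        + (1 - ∏ i, DqFun D sharp q (a i)) := by
    rw [hba]
    exact hlow
  exact le_antisymm (hub a) ((ENNReal.add_le_add_iff_right hfin).1 hstep)
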